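/- For any matrix M in SL(2,ℂ) and any vector v in ℂ², the maximum of ‖Mv‖ and ‖M²v‖ is at least (1/2)·min(1, 1/|Tr M|)·‖v‖. -/

import Mathlib

/-- The Euclidean norm of a vector in ℂ². -/
noncomputable def vnorm (v : Fin 2 → ℂ) : ℝ := ‖(WithLp.equiv 2 (Fin 2 → ℂ)).symm v‖

lemma vnorm_nonneg (v : Fin 2 → ℂ) : 0 ≤ vnorm v := norm_nonneg _

lemma vnorm_sub_le (a b : Fin 2 → ℂ) : vnorm (a - b) ≤ vnorm a + vnorm b := by
  unfold vnorm
  rw [WithLp.equiv_symm_apply, WithLp.toLp_sub]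
  exact norm_sub_le _ _

lemma vnorm_smul (c : ℂ) (a : Fin 2 → ℂ) : vnorm (c • a) = ‖c‖ * vnorm a := by
  unfold vnorm
  rw [WithLp.equiv_symm_apply, WithLp.toLp_smul, norm_smul]

lemma ch_sq (M : Matrix (Fin 2) (Fin 2) ℂ) (hM : M.det = 1) :
    M * M = M.trace • M - 1 := by
  rw [Matrix.det_fin_two] at hM
  ext i j
  fin_cases i <;> fin_cases j <;>
    simp [Matrix.mul_apply, Fin.sum_univ_two, Matrix.trace_fin_two, Matrix.one_apply] <;>
    first | linear_combination -hM | ring1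

/-- For any `M ∈ SL(2,ℂ)` and `v ∈ ℂ²`,
`max (‖Mv‖, ‖M²v‖) ≥ (1/2) * min (1, 1/|Tr M|) * ‖v‖`, where when `Tr M = 0` the
quantity `1/|Tr M|` is interpreted as `+∞`, so that `min (1, 1/|Tr M|) = 1`. -/
theorem sl2_two_block_gordon (M : Matrix (Fin 2) (Fin 2) ℂ) (hM : M.det = 1)
    (v : Fin 2 → ℂ) :
    (1 / 2) * min 1 (if M.trace = 0 then 1 else ‖M.trace‖⁻¹) * vnorm v ≤
      max (vnorm (M.mulVec v)) (vnorm ((M * M).mulVec v)) := by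
  have key : (M * M).mulVec v = M.trace • M.mulVec v - v := by
    rw [ch_sq M hM, Matrix.sub_mulVec, Matrix.smul_mulVec, Matrix.one_mulVec]
  have hv : v = M.trace • M.mulVec v - (M * M).mulVec v := by
    rw [key]; abel
  have htri : vnorm v ≤ ‖M.trace‖ * vnorm (M.mulVec v) + vnorm ((M * M).mulVec v) := by
    calc vnorm v = vnorm (M.trace • M.mulVec v - (M * M).mulVec v) := by rw [← hv]
    _ ≤ vnorm (M.trace • M.mulVec v) + vnorm ((M * M).mulVec v) := vnorm_sub_le _ _
    _ = ‖M.trace‖ * vnorm (M.mulVec v) + vnorm ((M * M).mulVec v) := by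
        rw [vnorm_smul]
  set a := vnorm (M.mulVec v)
  set b := vnorm ((M * M).mulVec v)
  have ha : 0 ≤ a := vnorm_nonneg _
  have hb : 0 ≤ b := vnorm_nonneg _
  have ham : a ≤ max a b := le_max_left _ _
  have hbm : b ≤ max a b := le_max_right _ _
  by_cases h : M.trace = 0
  · simp only [h, if_pos, min_self, one_mul]
    have hvb : vnorm v = b := by
      have hk : (M * M).mulVec v = -v := by rw [key, h]; simp
      show vnorm v = vnorm ((M * M).mulVec v)
      rw [hk]
      unfold vnorm
      rw [WithLp.equiv_symm_apply, WithLp.toLp_neg, norm_neg]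
    linarith [hbm]
  · simp only [h, if_neg, ite_false]
    set T := ‖M.trace‖ with hT
    have hTpos : 0 < T := norm_pos_iff.mpr h
    have hmin0 : (0:ℝ) ≤ min 1 T⁻¹ := le_min zero_le_one (by positivity)
    have hm : 0 ≤ max a b := le_trans ha ham
    have h1 : vnorm v ≤ (T + 1) * max a b := by
      calc vnorm v ≤ T * a + b := htri
      _ ≤ T * max a b + max a b := by
          have := mul_le_mul_of_nonneg_left ham (le_of_lt hTpos)
          linarith
      _ = (T + 1) * max a b := by ring
    have hmin2 : min 1 T⁻¹ * (T + 1) ≤ 2 := by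
      rcases le_total T 1 with hle | hge
      · have : (1:ℝ) ≤ T⁻¹ := (one_le_inv_iff₀).2 ⟨hTpos, hle⟩
        rw [min_eq_left this]
        linarith
      · have hinv : T⁻¹ ≤ 1 := inv_le_one_of_one_le₀ hge
        rw [min_eq_right hinv]
        have heq : T⁻¹ * (T + 1) = 1 + T⁻¹ := by field_simp
        rw [heq]
        have : (0:ℝ) < T⁻¹ := by positivity
        linarith
    calc (1 / 2) * min 1 T⁻¹ * vnorm v
        ≤ (1 / 2) * min 1 T⁻¹ * ((T + 1) * max a b) := by
          apply mul_le_mul_of_nonneg_left h1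
          positivity
      _ = (1 / 2 * (min 1 T⁻¹ * (T + 1))) * max a b := by ring
      _ ≤ 1 * max a b := mul_le_mul_of_nonneg_right (by linarith) hm
      _ = max a b := one_mul _
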